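/- Let φ : [0,∞) → [0,∞) be a continuous concave function with φ(0) = 0. Then for every ε > 0 there exists a continuous concave function ψ : [0,∞) → [0,∞) that is continuously differentiable on (0,∞), satisfies ψ(0) = 0, and satisfies |φ(x) − ψ(x)| ≤ ε for all x ≥ 0. -/

import Mathlib

open intervalIntegral Set MeasureTheory


/-- `d` is a metric on `X`: it vanishes exactly on the diagonal, is symmetric,
and satisfies the triangle inequality. -/
def IsMetricOn {X : Type*} (d : X → X → ℝ) : Prop :=
  (∀ x y : X, d x y = 0 ↔ x = y) ∧ (∀ x y : X, d x y = d y x) ∧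
    (∀ x y z : X, d x z ≤ d x y + d y z)

/-- `φ : [0,∞) → [0,∞)` is a metric transform: for every metric space `(X,d)`,
`φ ∘ d` is again a metric on `X`. -/
def IsMetricTransform (φ : ℝ → ℝ) : Prop :=
  ∀ (X : Type) (d : X → X → ℝ), IsMetricOn d → IsMetricOn (fun x y => φ (d x y))

/-- The Gromov product `(x|y)_w` for a distance function `d`. -/
noncomputable def gromovProd {X : Type*} (d : X → X → ℝ) (w x y : X) : ℝ :=
  (d x w + d y w - d x y) / 2

/-- `d` is `δ`-hyperbolic: `(x|y)_w ≥ min{(x|z)_w, (y|z)_w} − δ` for all `x,y,z,w`. -/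
def IsDeltaHyp {X : Type*} (d : X → X → ℝ) (δ : ℝ) : Prop :=
  ∀ w x y z : X, min (gromovProd d w x z) (gromovProd d w y z) - δ ≤ gromovProd d w x y

/-- `d` is Gromov hyperbolic: it is `δ`-hyperbolic for some `δ ≥ 0`. -/
def IsGromovHyp {X : Type*} (d : X → X → ℝ) : Prop :=
  ∃ δ : ℝ, 0 ≤ δ ∧ IsDeltaHyp d δ

/-- `φ` is approximately nondecreasing on `[0,∞)`:
`η`-nondecreasing for some `η ≥ 0`. -/
def ApproxNondecreasing (φ : ℝ → ℝ) : Prop :=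
  ∃ η : ℝ, 0 ≤ η ∧ ∀ t s : ℝ, 0 ≤ t → t ≤ s → φ t ≤ φ s + η

/-- `φ` is unbounded on `[0,∞)`. -/
def UnboundedOnNonneg (φ : ℝ → ℝ) : Prop :=
  ∀ M : ℝ, ∃ t : ℝ, 0 ≤ t ∧ M < φ t

/-- `φ` is a `(λ,k)`-approximate dilation for some `λ > 0`, `k ≥ 0`. -/
def ApproxDilation (φ : ℝ → ℝ) : Prop :=
  ∃ lam k : ℝ, 0 < lam ∧ 0 ≤ k ∧ ∀ t : ℝ, 0 ≤ t → |φ t - lam * t| ≤ k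

/-- `φ` is logarithm-like: `t ↦ φ(2t) − φ(t)` is bounded from above on `[0,∞)`. -/
def LogarithmLike (φ : ℝ → ℝ) : Prop :=
  ∃ C : ℝ, ∀ t : ℝ, 0 ≤ t → φ (2 * t) - φ t ≤ C

/-- The distance `|x − y|_φ = φ(|x − y|)` on the half line `[0,∞)`. -/
noncomputable def halfLineDist (φ : ℝ → ℝ) (x y : {t : ℝ // 0 ≤ t}) : ℝ :=
  φ |x.1 - y.1|

/-- `(X,d)` contains a `k`-rough geodesic ray for some `k ≥ 0`. -/
def HasRoughGeodesicRay (X : Type*) (d : X → X → ℝ) : Prop :=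
  ∃ k : ℝ, 0 ≤ k ∧ ∃ γ : ℝ → X, ∀ t s : ℝ, 0 ≤ t → 0 ≤ s →
    |t - s| - k ≤ d (γ t) (γ s) ∧ d (γ t) (γ s) ≤ |t - s| + k

/-- `d` is approximately ultrametric: `δ`-ultrametric for some `δ ≥ 0`. -/
def ApproxUltrametric {X : Type*} (d : X → X → ℝ) : Prop :=
  ∃ δ : ℝ, 0 ≤ δ ∧ ∀ x y z : X, d x y ≤ max (d x z) (d z y) + δ

/-- `d` is `k`-roughly geodesic: every pair of points is joined by a `k`-rough
geodesic segment. -/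
def RoughlyGeodesicK {X : Type*} (d : X → X → ℝ) (k : ℝ) : Prop :=
  ∀ x y : X, ∃ b : ℝ, 0 ≤ b ∧ ∃ γ : ℝ → X, γ 0 = x ∧ γ b = y ∧
    ∀ t s : ℝ, t ∈ Set.Icc 0 b → s ∈ Set.Icc 0 b →
      |t - s| - k ≤ d (γ t) (γ s) ∧ d (γ t) (γ s) ≤ |t - s| + k

/-- `d` has the `k`-rough midpoint property. -/
def RoughMidpointK {X : Type*} (d : X → X → ℝ) (k : ℝ) : Prop :=
  ∀ x y : X, ∃ z : X, max (d x z) (d y z) ≤ d x y / 2 + k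

/-- `(a,b,c)` is a triangle triplet. -/
def IsTriangleTriplet (a b c : ℝ) : Prop := a ≤ b + c ∧ b ≤ a + c ∧ c ≤ a + b

/-- Uniform approximation of continuous concave functions by concave functions
of class `C¹` on `(0,∞)`. -/
theorem stmt_8 (φ : ℝ → ℝ)
    (hnonneg : ∀ x : ℝ, 0 ≤ x → 0 ≤ φ x)
    (hcont : ContinuousOn φ (Set.Ici 0))
    (hconc : ConcaveOn ℝ (Set.Ici 0) φ)
    (h0 : φ 0 = 0) :
    ∀ ε : ℝ, 0 < ε → ∃ ψ : ℝ → ℝ,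
      ContinuousOn ψ (Set.Ici 0) ∧ ConcaveOn ℝ (Set.Ici 0) ψ ∧
      (∀ x : ℝ, 0 ≤ x → 0 ≤ ψ x) ∧ ContDiffOn ℝ 1 ψ (Set.Ioi 0) ∧
      ψ 0 = 0 ∧ ∀ x : ℝ, 0 ≤ x → |φ x - ψ x| ≤ ε := by
  intro ε hε
  -- φ is nondecreasing on [0,∞)
  have hmono : ∀ a b : ℝ, 0 ≤ a → a ≤ b → φ a ≤ φ b := by
    intro a b ha hab
    rcases eq_or_lt_of_le hab with rfl | hab
    · exact le_rfl
    have hb : (0:ℝ) ≤ b := le_trans ha hab.le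
    refine le_of_forall_pos_le_add ?_
    intro ε' hε'
    by_cases hpa : φ a ≤ 0
    · linarith [hnonneg b hb]
    push_neg at hpa
    set m := max 1 ((φ a)/ε') with hm
    have hm1 : (1:ℝ) ≤ m := le_max_left _ _
    have hm0 : (0:ℝ) < m := lt_of_lt_of_le one_pos hm1
    set t := 1/m with ht
    have ht0 : 0 < t := by positivity
    have ht1 : t ≤ 1 := by rw [ht, div_le_one hm0]; exact hm1
    set c := a + (b - a) * m with hc
    have hcb : b ≤ c := by nlinarith
    have hc0 : (0:ℝ) ≤ c := le_trans hb hcb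
    have hcomb : (1 - t) * a + t * c = b := by
      rw [ht, hc]; field_simp; ring
    have hkey := hconc.2 (mem_Ici.2 ha) (mem_Ici.2 hc0)
      (by linarith : (0:ℝ) ≤ 1 - t) ht0.le (by ring)
    simp only [smul_eq_mul, hcomb] at hkey
    have htφ : t * φ a ≤ ε' := by
      have hmge : (φ a)/ε' ≤ m := le_max_right _ _
      rw [ht, div_mul_eq_mul_div, div_le_iff₀ hm0]
      calc 1 * φ a = φ a := one_mul _
        _ ≤ ε' * m := by rw [mul_comm]; exact (div_le_iff₀ hε').mp hmge
    have hφc := hnonneg c hc0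
    nlinarith
  -- subadditivity: φ(x+h) ≤ φ x + φ h for x ≥ 0, h > 0
  have hsubadd : ∀ x h : ℝ, 0 ≤ x → 0 < h → φ (x + h) ≤ φ x + φ h := by
    intro x h hx hh
    have hxh : (0:ℝ) < x + h := by linarith
    have h1 := hconc.2 (mem_Ici.2 hxh.le) (mem_Ici.2 (le_refl 0))
      (by positivity : (0:ℝ) ≤ x/(x+h)) (by positivity : (0:ℝ) ≤ h/(x+h))
      (by rw [← add_div, div_self hxh.ne'])
    have h2 := hconc.2 (mem_Ici.2 hxh.le) (mem_Ici.2 (le_refl 0))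
      (by positivity : (0:ℝ) ≤ h/(x+h)) (by positivity : (0:ℝ) ≤ x/(x+h))
      (by rw [← add_div, add_comm h x, div_self hxh.ne'])
    simp only [smul_eq_mul, smul_zero, add_zero, h0, mul_zero] at h1 h2
    have e1 : x / (x + h) * (x + h) = x := by field_simp
    have e2 : h / (x + h) * (x + h) = h := by field_simp
    rw [e1] at h1
    rw [e2] at h2
    have e3 : x / (x + h) + h / (x + h) = 1 := by field_simp
    nlinarith [hnonneg (x+h) hxh.le]
  -- choose h small with φ h ≤ ε
  obtain ⟨δ, hδ0, hδ⟩ := Metric.continuousWithinAt_iff.mp (hcont 0 (mem_Ici.2 le_rfl)) ε hε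
  set h : ℝ := δ / 2 with hhdef
  have hh0 : 0 < h := by positivity
  have hφh : φ h ≤ ε := by
    have := hδ (mem_Ici.2 hh0.le) (by
      simp only [Real.dist_eq, sub_zero]
      rw [abs_of_pos hh0]; linarith)
    rw [Real.dist_eq, h0, sub_zero] at this
    exact le_of_lt (lt_of_abs_lt this)
  have hφh0 : 0 ≤ φ h := hnonneg h hh0.le
  -- extend φ continuously to all of ℝ
  set φ' : ℝ → ℝ := fun x => φ (max x 0) with hφ'def
  have hφ'cont : Continuous φ' :=
    hcont.comp_continuous (continuous_id.max continuous_const)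
      (fun x => mem_Ici.2 (le_max_right _ _))
  have hφ'eq : ∀ x : ℝ, 0 ≤ x → φ' x = φ x := fun x hx => by
    simp [hφ'def, max_eq_left hx]
  -- the primitive
  set F : ℝ → ℝ := fun x => ∫ t in (0:ℝ)..x, φ' t with hFdef
  have hF : ∀ x : ℝ, HasDerivAt F (φ' x) x := fun x =>
    integral_hasDerivAt_right (hφ'cont.intervalIntegrable _ _)
      (hφ'cont.stronglyMeasurable.stronglyMeasurableAtFilter)
      hφ'cont.continuousAt
  set ψ : ℝ → ℝ := fun x => (F (x + h) - F x - F h) / h with hψdef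
  -- ψ is C¹ everywhere
  have hψderiv : ∀ x : ℝ, HasDerivAt ψ ((φ' (x + h) - φ' x) / h) x := by
    intro x
    have h1 : HasDerivAt (fun y => F (y + h)) (φ' (x + h)) x := by
      have := (hF (x + h)).comp x ((hasDerivAt_id x).add_const h)
      rw [mul_one] at this
      exact this
    simpa using ((h1.sub (hF x)).sub_const (F h)).div_const h
  have hψdiff : Differentiable ℝ ψ := fun x => (hψderiv x).differentiableAt
  have hψC1 : ContDiff ℝ 1 ψ := by
    rw [contDiff_one_iff_deriv]
    refine ⟨hψdiff, ?_⟩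
    have hd : deriv ψ = fun x => (φ' (x + h) - φ' x) / h :=
      funext fun x => (hψderiv x).deriv
    rw [hd]
    exact ((hφ'cont.comp (continuous_id.add continuous_const)).sub hφ'cont).div_const _
  -- integral representation
  have hII : ∀ x : ℝ, IntervalIntegrable φ' volume 0 x :=
    fun x => hφ'cont.intervalIntegrable _ _
  have hrep : ∀ x : ℝ, 0 ≤ x → F (x + h) - F x = ∫ s in (0:ℝ)..h, φ (x + s) := by
    intro x hx
    have h1 : F (x + h) - F x = ∫ t in x..(x + h), φ' t :=
      integral_interval_sub_left (hII _) (hII _)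
    have h2 : (∫ s in (0:ℝ)..h, φ' (s + x)) = ∫ t in x..(x+h), φ' t := by
      rw [integral_comp_add_right φ' x]
      norm_num [add_comm]
    rw [h1, ← h2]
    refine integral_congr ?_
    intro s hs
    rw [uIcc_of_le hh0.le] at hs
    show φ' (s + x) = φ (x + s)
    rw [add_comm s x, hφ'eq _ (add_nonneg hx hs.1)]
  have hF0 : F 0 = 0 := integral_same
  have hFh : F h = ∫ s in (0:ℝ)..h, φ s := by
    have := hrep 0 le_rfl
    simpa [hF0] using this
  have hψrep : ∀ x : ℝ, 0 ≤ x →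
      ψ x = ((∫ s in (0:ℝ)..h, φ (x + s)) - ∫ s in (0:ℝ)..h, φ s) / h := by
    intro x hx
    simp only [hψdef]
    rw [← hFh]
    rw [show F (x + h) - F x - F h = (F (x + h) - F x) - F h by ring, hrep x hx]
  -- integrability of shifted φ
  have hint : ∀ x : ℝ, 0 ≤ x → IntervalIntegrable (fun s => φ (x + s)) volume 0 h := by
    intro x hx
    refine (hcont.comp (continuous_const.add continuous_id).continuousOn ?_).intervalIntegrable
    intro s hs
    rw [uIcc_of_le hh0.le] at hs
    exact mem_Ici.2 (by simpa using add_nonneg hx hs.1)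
  have hint0 : IntervalIntegrable φ volume 0 h := by
    refine (hcont.mono ?_).intervalIntegrable
    rw [uIcc_of_le hh0.le]
    exact fun s hs => hs.1
  have hBnn : 0 ≤ ∫ s in (0:ℝ)..h, φ s :=
    integral_nonneg hh0.le (fun s hs => hnonneg s hs.1)
  have hBle : (∫ s in (0:ℝ)..h, φ s) ≤ h * φ h := by
    have := integral_mono_on hh0.le hint0 (intervalIntegrable_const) 
      (fun s hs => hmono s h hs.1 hs.2)
    rwa [intervalIntegral.integral_const, sub_zero, smul_eq_mul] at this
  refine ⟨ψ, hψC1.continuous.continuousOn, ?_, ?_, hψC1.contDiffOn, ?_, ?_⟩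
  · -- concavity
    refine ⟨convex_Ici 0, ?_⟩
    intro x hx y hy a b ha hb hab
    rw [mem_Ici] at hx hy
    have hz : (0:ℝ) ≤ a * x + b * y := add_nonneg (mul_nonneg ha hx) (mul_nonneg hb hy)
    simp only [smul_eq_mul]
    rw [hψrep x hx, hψrep y hy, hψrep _ hz]
    set B := ∫ s in (0:ℝ)..h, φ s
    have key : a * (∫ s in (0:ℝ)..h, φ (x+s)) + b * (∫ s in (0:ℝ)..h, φ (y+s))
        ≤ ∫ s in (0:ℝ)..h, φ (a * x + b * y + s) := by
      rw [← intervalIntegral.integral_const_mul, ← intervalIntegral.integral_const_mul,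
        ← integral_add ((hint x hx).const_mul a) ((hint y hy).const_mul b)]
      refine integral_mono_on hh0.le
        (((hint x hx).const_mul a).add ((hint y hy).const_mul b)) (hint _ hz) ?_
      intro s hs
      have hc := hconc.2 (mem_Ici.2 (add_nonneg hx hs.1)) (mem_Ici.2 (add_nonneg hy hs.1))
        ha hb hab
      simp only [smul_eq_mul] at hc
      have e : a * (x + s) + b * (y + s) = a * x + b * y + s := by
        have : a * (x + s) + b * (y + s) = a * x + b * y + (a + b) * s := by ring
        rw [this, hab, one_mul]
      rw [e] at hc
      exact hc
    set Ax := ∫ s in (0:ℝ)..h, φ (x+s) with hAx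
    set Ay := ∫ s in (0:ℝ)..h, φ (y+s) with hAy
    set Az := ∫ s in (0:ℝ)..h, φ (a*x+b*y+s) with hAz
    have e : a * ((Ax - B) / h) + b * ((Ay - B) / h)
        = (a * Ax + b * Ay - (a + b) * B) / h := by ring
    rw [e, hab, one_mul, div_le_div_iff₀ hh0 hh0]
    exact mul_le_mul_of_nonneg_right (by linarith) hh0.le
  · -- nonnegativity
    intro x hx
    rw [hψrep x hx]
    refine div_nonneg (sub_nonneg.2 ?_) hh0.le
    refine integral_mono_on hh0.le hint0 (hint x hx) ?_
    intro s hs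
    exact hmono s (x + s) hs.1 (by linarith)
  · -- ψ 0 = 0
    simp [hψdef, hF0]
  · -- approximation
    intro x hx
    have hAub : (∫ s in (0:ℝ)..h, φ (x+s)) ≤ h * (φ x + φ h) := by
      have := integral_mono_on hh0.le (hint x hx) intervalIntegrable_const
        (fun s hs => le_trans (hmono (x+s) (x+h) (add_nonneg hx hs.1) (by linarith [hs.2]))
          (hsubadd x h hx hh0))
      rwa [intervalIntegral.integral_const, sub_zero, smul_eq_mul] at this
    have hAlb : h * φ x ≤ ∫ s in (0:ℝ)..h, φ (x+s) := by
      have := integral_mono_on hh0.le intervalIntegrable_const (hint x hx)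
        (fun s hs => hmono x (x+s) hx (by linarith [hs.1]))
      rwa [intervalIntegral.integral_const, sub_zero, smul_eq_mul] at this
    rw [hψrep x hx, abs_le]
    set A := ∫ s in (0:ℝ)..h, φ (x+s)
    set B := ∫ s in (0:ℝ)..h, φ s
    constructor
    · have hub : (A - B) / h ≤ φ x + ε := by
        rw [div_le_iff₀ hh0]; nlinarith
      linarith
    · have hlb : φ x - ε ≤ (A - B) / h := by
        rw [le_div_iff₀ hh0]; nlinarith
      linarith
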